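/- arXiv:2511.17534 — 3 statements merged into one kernel-verified Lean document; each statement's English description precedes it below -/
import Mathlib

section
/- Let ψ, ξ, χ : ℝ^{1+3} → ℝ be smooth and let Z be any one of the Lorentz vector fields ∂_μ (0 ≤ μ ≤ 3), Ω_{0k} = t∂_k + x_k∂_t, Ω_{ij} = x_i∂_j − x_j∂_i, or S = t∂_t + Σ_i x_i∂_i. Then Z[Q^{αβ}(ψ, Q_{αβ}(ξ,χ))] = Q^{αβ}(Zψ, Q_{αβ}(ξ,χ)) + Q^{αβ}(ψ, Q_{αβ}(Zξ, χ)) + Q^{αβ}(ψ, Q_{αβ}(ξ, Zχ)) + c·Q^{αβ}(ψ, Q_{αβ}(ξ,χ)), where c = −4 if Z = S and c = 0 for all the other fields. -/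
noncomputable section

open Real MeasureTheory

/-- Spacetime point in `ℝ^{1+3}`: coordinate `0` is the time `t`,
coordinates `i.succ` (for `i : Fin 3`) are the spatial coordinates `x_i`. -/
abbrev Pt := Fin 4 → ℝ

/-- A point of the initial slice `{t = 1} ≅ ℝ³`. -/
abbrev Sp := Fin 3 → ℝ

/-- The spacetime point with time `t` and space part `x`. -/
def mkPt (t : ℝ) (x : Sp) : Pt := Fin.cons t x

/-- Coordinate partial derivative `∂_μ`. -/
def pd (μ : Fin 4) (f : Pt → ℝ) : Pt → ℝ := fun p => fderiv ℝ f p (Pi.single μ 1)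

/-- Radial coordinate `r = |x|`. -/
def rr (p : Pt) : ℝ := Real.sqrt (∑ i : Fin 3, (p i.succ) ^ 2)

/-- `ω_i = x_i / r`. -/
def om (i : Fin 3) (p : Pt) : ℝ := p i.succ / rr p

/-- Radial derivative `∂_r = Σ_i ω_i ∂_i`. -/
def pdr (f : Pt → ℝ) : Pt → ℝ := fun p => ∑ i : Fin 3, om i p * pd i.succ f p

/-- Outgoing null derivative `L = ∂_t + ∂_r`. -/
def Lop (f : Pt → ℝ) : Pt → ℝ := fun p => pd 0 f p + pdr f p

/-- Incoming null derivative `L̲ = ∂_t - ∂_r`. -/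
def Lbop (f : Pt → ℝ) : Pt → ℝ := fun p => pd 0 f p - pdr f p

/-- Angular ("good") derivative `∂̄_i = ∂_i - ω_i ∂_r`. -/
def pbar (i : Fin 3) (f : Pt → ℝ) : Pt → ℝ := fun p => pd i.succ f p - om i p * pdr f p

/-- Null coordinate `u = (t - r)/2`. -/
def uuf (p : Pt) : ℝ := (p 0 - rr p) / 2

/-- Null coordinate `ū = (t + r)/2`. -/
def ubf (p : Pt) : ℝ := (p 0 + rr p) / 2

/-- `r = |x|` on the initial slice. -/
def rr3 (x : Sp) : ℝ := Real.sqrt (∑ i : Fin 3, (x i) ^ 2)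

/-- Minkowski signature sign `η^{μμ}` (`-1` for time, `+1` for space). -/
def eta : Fin 4 → ℝ := fun μ => if μ = 0 then -1 else 1

/-- Null form `Q(ξ,χ) = -∂_tξ ∂_tχ + Σ_i ∂_iξ ∂_iχ`. -/
def nullQ (ξ χ : Pt → ℝ) : Pt → ℝ :=
  fun p => -(pd 0 ξ p * pd 0 χ p) + ∑ i : Fin 3, pd i.succ ξ p * pd i.succ χ p

/-- Null form `Q_{αβ}(ξ,χ) = ∂_αξ ∂_βχ - ∂_βξ ∂_αχ`. -/
def Qdn (α β : Fin 4) (ξ χ : Pt → ℝ) : Pt → ℝ :=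
  fun p => pd α ξ p * pd β χ p - pd β ξ p * pd α χ p

/-- Raised-index null form `Q^{αβ}(ξ,χ) = ∂^αξ ∂^βχ - ∂^βξ ∂^αχ`. -/
def Qup (α β : Fin 4) (ξ χ : Pt → ℝ) : Pt → ℝ :=
  fun p => eta α * eta β * Qdn α β ξ χ p

/-- Double null form `Q^{αβ}(ψ, Q_{αβ}(ξ,χ))`, summed over `α, β`. -/
def dnull (ψ ξ χ : Pt → ℝ) : Pt → ℝ :=
  fun p => ∑ α : Fin 4, ∑ β : Fin 4,
    (eta α * pd α ψ p * (eta β * pd β (Qdn α β ξ χ) p)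
      - eta β * pd β ψ p * (eta α * pd α (Qdn α β ξ χ) p))

/-- Quadratic contraction `Q^{αβ}(ψ,ζ) · Q_{αβ}(ξ,χ)`, summed over `α, β`. -/
def QQgen (ψ ζ ξ χ : Pt → ℝ) : Pt → ℝ :=
  fun p => ∑ α : Fin 4, ∑ β : Fin 4, Qup α β ψ ζ p * Qdn α β ξ χ p

/-- Contraction `Q^{αβ}(θ,φ) Q_{αβ}(θ,φ)`. -/
def QQc (θ φ : Pt → ℝ) : Pt → ℝ := QQgen θ φ θ φ
/-- Lorentz boost `Ω_{0i} = t ∂_i + x_i ∂_t`. -/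
def boostOp (i : Fin 3) (f : Pt → ℝ) : Pt → ℝ :=
  fun p => p 0 * pd i.succ f p + p i.succ * pd 0 f p

/-- Rotation `Ω_{ij} = x_i ∂_j - x_j ∂_i`. -/
def rotOp (i j : Fin 3) (f : Pt → ℝ) : Pt → ℝ :=
  fun p => p i.succ * pd j.succ f p - p j.succ * pd i.succ f p

/-- Scaling field `S = t ∂_t + Σ_i x_i ∂_i`. -/
def scalOp (f : Pt → ℝ) : Pt → ℝ :=
  fun p => p 0 * pd 0 f p + ∑ i : Fin 3, p i.succ * pd i.succ f p


section Aux

lemma contDiff_pd {f : Pt → ℝ} (hf : ContDiff ℝ (⊤:ℕ∞) f) (μ : Fin 4) :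
    ContDiff ℝ (⊤:ℕ∞) (pd μ f) := by
  have h := hf.fderiv_right (m := (⊤:ℕ∞)) (by exact_mod_cast le_top)
  exact h.clm_apply contDiff_const

lemma pd_add {f g : Pt → ℝ} {p : Pt} (hf : DifferentiableAt ℝ f p)
    (hg : DifferentiableAt ℝ g p) (μ : Fin 4) :
    pd μ (fun q => f q + g q) p = pd μ f p + pd μ g p := by
  simp [pd, fderiv_fun_add hf hg]

lemma pd_neg {f : Pt → ℝ} {p : Pt} (μ : Fin 4) :
    pd μ (fun q => -f q) p = -pd μ f p := by
  simp [pd, fderiv_neg]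

lemma pd_sub {f g : Pt → ℝ} {p : Pt} (hf : DifferentiableAt ℝ f p)
    (hg : DifferentiableAt ℝ g p) (μ : Fin 4) :
    pd μ (fun q => f q - g q) p = pd μ f p - pd μ g p := by
  simp [pd, fderiv_fun_sub hf hg]

lemma pd_mul {f g : Pt → ℝ} {p : Pt} (hf : DifferentiableAt ℝ f p)
    (hg : DifferentiableAt ℝ g p) (μ : Fin 4) :
    pd μ (fun q => f q * g q) p = pd μ f p * g p + f p * pd μ g p := by
  simp [pd, fderiv_fun_mul hf hg]; ring

lemma pd_const_mul {f : Pt → ℝ} {p : Pt} (hf : DifferentiableAt ℝ f p) (c : ℝ) (μ : Fin 4) :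
    pd μ (fun q => c * f q) p = c * pd μ f p := by
  simp [pd, fderiv_const_mul hf]

lemma pd_sum {n : ℕ} {f : Fin n → Pt → ℝ} {p : Pt}
    (hf : ∀ i, DifferentiableAt ℝ (f i) p) (μ : Fin 4) :
    pd μ (fun q => ∑ i, f i q) p = ∑ i, pd μ (f i) p := by
  simp [pd, fderiv_fun_sum (fun i _ => hf i)]

lemma pd_coord {p : Pt} (μ ν : Fin 4) :
    pd μ (fun q => q ν) p = if ν = μ then 1 else 0 := by
  have : (fun q : Pt => q ν) = (ContinuousLinearMap.proj (R := ℝ) (φ := fun _ : Fin 4 => ℝ) ν) := rfl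
  simp [pd, this, ContinuousLinearMap.fderiv, Pi.single_apply]

lemma pd_coord_mul {f : Pt → ℝ} {p : Pt} (hf : DifferentiableAt ℝ f p) (μ ν : Fin 4) :
    pd μ (fun q => q ν * f q) p = (if ν = μ then f p else 0) + p ν * pd μ f p := by
  have hc : DifferentiableAt ℝ (fun q : Pt => q ν) p :=
    (ContinuousLinearMap.proj (R := ℝ) (φ := fun _ : Fin 4 => ℝ) ν).differentiableAt
  rw [pd_mul hc hf, pd_coord]
  split_ifs <;> ring

lemma pd_comm {f : Pt → ℝ} (hf : ContDiff ℝ (⊤:ℕ∞) f) (μ ν : Fin 4) :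
    pd μ (pd ν f) = pd ν (pd μ f) := by
  funext p
  have hd : Differentiable ℝ (fderiv ℝ f) :=
    (hf.fderiv_right (m := (⊤:ℕ∞)) (by exact_mod_cast le_top)).differentiable (by simp)
  have key : ∀ κ₁ κ₂ : Fin 4, pd κ₁ (pd κ₂ f) p
      = fderiv ℝ (fderiv ℝ f) p (Pi.single κ₁ 1) (Pi.single κ₂ 1) := by
    intro κ₁ κ₂
    show fderiv ℝ (fun q => (fderiv ℝ f q) (Pi.single κ₂ 1)) p (Pi.single κ₁ 1) = _
    rw [fderiv_clm_apply (hd p) (differentiableAt_const (Pi.single κ₂ 1))]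
    simp
  rw [key, key]
  exact second_derivative_symmetric (fun y => ((hf.differentiable (by simp)) y).hasFDerivAt)
    ((hd p).hasFDerivAt) _ _

/-- Monomial vector field `x_μ ∂_ν`. -/
def Zm (μ ν : Fin 4) (f : Pt → ℝ) : Pt → ℝ := fun p => p μ * pd ν f p

abbrev Sm (f : Pt → ℝ) : Prop := ContDiff ℝ (⊤:ℕ∞) f

lemma smDAt {f : Pt → ℝ} (hf : Sm f) (p : Pt) : DifferentiableAt ℝ f p :=
  (hf.differentiable (by simp)).differentiableAt

lemma Sm.pd {f : Pt → ℝ} (hf : Sm f) (μ : Fin 4) : Sm (pd μ f) := contDiff_pd hf μ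

lemma sm_coord (ν : Fin 4) : Sm (fun q : Pt => q ν) :=
  (ContinuousLinearMap.proj (R := ℝ) (φ := fun _ : Fin 4 => ℝ) ν).contDiff

lemma Sm.qdn {ξ χ : Pt → ℝ} (hξ : Sm ξ) (hχ : Sm χ) (α β : Fin 4) : Sm (Qdn α β ξ χ) :=
  ((hξ.pd α).mul (hχ.pd β)).sub ((hξ.pd β).mul (hχ.pd α))

lemma Sm.zm {f : Pt → ℝ} (hf : Sm f) (μ ν : Fin 4) : Sm (Zm μ ν f) :=
  (sm_coord μ).mul (hf.pd ν)

lemma pd_zero {p : Pt} (γ : Fin 4) : pd γ (fun _ : Pt => (0:ℝ)) p = 0 := by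
  simp [pd]

lemma pd_if {F : Pt → ℝ} {p : Pt} (c : Prop) [Decidable c] (γ : Fin 4) :
    pd γ (fun q => if c then F q else 0) p = if c then pd γ F p else 0 := by
  by_cases h : c <;> simp [h, pd_zero]

/-- Leibniz for `Qdn`: `∂_μ Q_{αβ}(ξ,χ) = Q_{αβ}(∂_μξ,χ) + Q_{αβ}(ξ,∂_μχ)`. -/
lemma pd_qdn {ξ χ : Pt → ℝ} (hξ : Sm ξ) (hχ : Sm χ) (μ α β : Fin 4) :
    pd μ (Qdn α β ξ χ) = fun p => Qdn α β (pd μ ξ) χ p + Qdn α β ξ (pd μ χ) p := by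
  funext p
  show pd μ (fun q => pd α ξ q * pd β χ q - pd β ξ q * pd α χ q) p = _
  rw [pd_sub (smDAt ((hξ.pd α).mul (hχ.pd β)) p) (smDAt ((hξ.pd β).mul (hχ.pd α)) p),
    pd_mul (smDAt (hξ.pd α) p) (smDAt (hχ.pd β) p),
    pd_mul (smDAt (hξ.pd β) p) (smDAt (hχ.pd α) p)]
  have c1 := congrFun (pd_comm hξ μ α) p
  have c2 := congrFun (pd_comm hξ μ β) p
  have c3 := congrFun (pd_comm hχ μ α) p
  have c4 := congrFun (pd_comm hχ μ β) p
  simp only [Qdn, c1, c2, c3, c4]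
  ring

lemma qdn_swap {ξ χ : Pt → ℝ} (α β : Fin 4) :
    Qdn β α ξ χ = fun q => -(Qdn α β ξ χ q) := by
  funext q; simp only [Qdn]; ring

lemma pd_qdn_swap {ξ χ : Pt → ℝ} {p : Pt} (α β γ : Fin 4) :
    pd γ (Qdn β α ξ χ) p = -pd γ (Qdn α β ξ χ) p := by
  rw [qdn_swap α β, pd_neg]

lemma pd_qdn_diag {ξ χ : Pt → ℝ} {p : Pt} (α γ : Fin 4) :
    pd γ (Qdn α α ξ χ) p = 0 := by
  have : Qdn α α ξ χ = fun _ : Pt => (0:ℝ) := by funext q; simp [Qdn]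
  rw [this, pd_zero]

/-- Commutator with monomial field: `∂_α (x_μ ∂_ν f) = δ_{μα} ∂_ν f + x_μ ∂_ν ∂_α f`. -/
lemma pd_zm {f : Pt → ℝ} {p : Pt} (hf : Sm f) (μ ν α : Fin 4) :
    pd α (Zm μ ν f) p = (if μ = α then pd ν f p else 0) + p μ * pd ν (pd α f) p := by
  show pd α (fun q => q μ * pd ν f q) p = _
  rw [pd_coord_mul (smDAt (hf.pd ν) p), congrFun (pd_comm hf α ν) p]

/-- Action of the monomial field on `Qdn`, grouped over the two slots. -/
lemma zm_qdn {ξ χ : Pt → ℝ} (hξ : Sm ξ) (hχ : Sm χ) (μ ν α β : Fin 4) :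
    (fun q => Qdn α β (Zm μ ν ξ) χ q + Qdn α β ξ (Zm μ ν χ) q)
      = fun q => q μ * pd ν (Qdn α β ξ χ) q
          + (if μ = α then Qdn ν β ξ χ q else 0)
          + (if μ = β then Qdn α ν ξ χ q else 0) := by
  funext q
  simp only [Qdn, pd_zm hξ μ ν α, pd_zm hξ μ ν β, pd_zm hχ μ ν α, pd_zm hχ μ ν β,
    congrFun (pd_qdn hξ hχ ν α β) q,
    congrFun (pd_comm hξ ν α) q, congrFun (pd_comm hξ ν β) q,
    congrFun (pd_comm hχ ν α) q, congrFun (pd_comm hχ ν β) q]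
  by_cases h1 : μ = α <;> by_cases h2 : μ = β <;> by_cases h3 : α = β <;>
    simp [h1, h2, h3, eq_comm, Qdn] <;> ring

lemma pd_sum2 (F : Fin 4 → Fin 4 → Pt → ℝ) {p : Pt}
    (h : ∀ α β, Sm (F α β)) (γ : Fin 4) :
    pd γ (fun q => ∑ α : Fin 4, ∑ β : Fin 4, F α β q) p
      = ∑ α : Fin 4, ∑ β : Fin 4, pd γ (F α β) p := by
  rw [pd_sum (f := fun α q => ∑ β : Fin 4, F α β q)
    (fun α => smDAt (ContDiff.sum fun β _ => h α β) p) γ]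
  exact Finset.sum_congr rfl fun α _ =>
    pd_sum (f := fun β q => F α β q) (fun β => smDAt (h α β) p) γ

lemma pd_summand {A B C D : Pt → ℝ} {p : Pt} (hA : Sm A) (hB : Sm B) (hC : Sm C) (hD : Sm D)
    (a b c d : ℝ) (γ : Fin 4) :
    pd γ (fun q => a * A q * (b * B q) - c * C q * (d * D q)) p
      = (a * pd γ A p * (b * B p) + a * A p * (b * pd γ B p))
        - (c * pd γ C p * (d * D p) + c * C p * (d * pd γ D p)) := by
  have sA : Sm (fun q => a * A q) := contDiff_const.mul hA
  have sB : Sm (fun q => b * B q) := contDiff_const.mul hB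
  have sC : Sm (fun q => c * C q) := contDiff_const.mul hC
  have sD : Sm (fun q => d * D q) := contDiff_const.mul hD
  rw [pd_sub (smDAt (sA.mul sB) p) (smDAt (sC.mul sD) p),
    pd_mul (smDAt sA p) (smDAt sB p), pd_mul (smDAt sC p) (smDAt sD p),
    pd_const_mul (smDAt hA p) a, pd_const_mul (smDAt hB p) b,
    pd_const_mul (smDAt hC p) c, pd_const_mul (smDAt hD p) d]

/-- Leibniz expansion of a partial derivative of the double null form. -/
lemma pd_dnull {ψ ξ χ : Pt → ℝ} (hψ : Sm ψ) (hξ : Sm ξ) (hχ : Sm χ) (γ : Fin 4) (p : Pt) :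
    pd γ (dnull ψ ξ χ) p = ∑ α : Fin 4, ∑ β : Fin 4,
      ((eta α * pd γ (pd α ψ) p * (eta β * pd β (Qdn α β ξ χ) p)
        + eta α * pd α ψ p * (eta β * pd γ (pd β (Qdn α β ξ χ)) p))
      - (eta β * pd γ (pd β ψ) p * (eta α * pd α (Qdn α β ξ χ) p)
        + eta β * pd β ψ p * (eta α * pd γ (pd α (Qdn α β ξ χ)) p))) := by
  unfold dnull
  rw [pd_sum2 (fun α β q => eta α * pd α ψ q * (eta β * pd β (Qdn α β ξ χ) q)
      - eta β * pd β ψ q * (eta α * pd α (Qdn α β ξ χ) q))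
    (fun α β =>
      ((contDiff_const.mul (hψ.pd α)).mul (contDiff_const.mul ((hξ.qdn hχ α β).pd β))).sub
        ((contDiff_const.mul (hψ.pd β)).mul (contDiff_const.mul ((hξ.qdn hχ α β).pd α)))) γ]
  exact Finset.sum_congr rfl fun α _ => Finset.sum_congr rfl fun β _ =>
    pd_summand (hψ.pd α) ((hξ.qdn hχ α β).pd β) (hψ.pd β) ((hξ.qdn hχ α β).pd α) _ _ _ _ γ

lemma sm_if {F : Pt → ℝ} (c : Prop) [Decidable c] (hF : Sm F) :
    Sm (fun q => if c then F q else 0) := by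
  by_cases h : c <;> simp only [h, if_true, if_false]
  · exact hF
  · exact contDiff_const

/-- Leibniz rule for coordinate derivatives on the double null form. -/
lemma pd_dnull_leibniz {ψ ξ χ : Pt → ℝ} (hψ : Sm ψ) (hξ : Sm ξ) (hχ : Sm χ)
    (μ : Fin 4) (p : Pt) :
    pd μ (dnull ψ ξ χ) p
      = dnull (pd μ ψ) ξ χ p + dnull ψ (pd μ ξ) χ p + dnull ψ ξ (pd μ χ) p := by
  rw [pd_dnull hψ hξ hχ μ p]
  unfold dnull
  simp only [← Finset.sum_add_distrib]
  refine Finset.sum_congr rfl fun α _ => Finset.sum_congr rfl fun β _ => ?_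
  rw [congrFun (pd_comm hψ μ α) p, congrFun (pd_comm hψ μ β) p,
    congrFun (pd_comm (hξ.qdn hχ α β) μ β) p, congrFun (pd_comm (hξ.qdn hχ α β) μ α) p,
    pd_qdn hξ hχ μ α β,
    pd_add (smDAt ((hξ.pd μ).qdn hχ α β) p) (smDAt (hξ.qdn (hχ.pd μ) α β) p) β,
    pd_add (smDAt ((hξ.pd μ).qdn hχ α β) p) (smDAt (hξ.qdn (hχ.pd μ) α β) p) α]
  ring

/-- The correction term produced by the monomial field `x_μ ∂_ν`. -/
def corr (μ ν : Fin 4) (ψ ξ χ : Pt → ℝ) : Pt → ℝ := fun p =>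
  ∑ α : Fin 4, ∑ β : Fin 4,
    ((eta α * (if μ = α then pd ν ψ p else 0) * (eta β * pd β (Qdn α β ξ χ) p)
      + eta α * pd α ψ p * (eta β * ((if μ = β then pd ν (Qdn α β ξ χ) p else 0)
          + (if μ = α then pd β (Qdn ν β ξ χ) p else 0)
          + (if μ = β then pd β (Qdn α ν ξ χ) p else 0))))
    - (eta β * (if μ = β then pd ν ψ p else 0) * (eta α * pd α (Qdn α β ξ χ) p)
      + eta β * pd β ψ p * (eta α * ((if μ = α then pd ν (Qdn α β ξ χ) p else 0)
          + (if μ = α then pd α (Qdn ν β ξ χ) p else 0)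
          + (if μ = β then pd α (Qdn α ν ξ χ) p else 0)))))

lemma zm_dnull {ψ ξ χ : Pt → ℝ} (hψ : Sm ψ) (hξ : Sm ξ) (hχ : Sm χ)
    (μ ν : Fin 4) (p : Pt) :
    Zm μ ν (dnull ψ ξ χ) p + corr μ ν ψ ξ χ p
      = dnull (Zm μ ν ψ) ξ χ p + dnull ψ (Zm μ ν ξ) χ p + dnull ψ ξ (Zm μ ν χ) p := by
  show p μ * pd ν (dnull ψ ξ χ) p + _ = _
  rw [pd_dnull hψ hξ hχ ν p]
  unfold dnull corr
  simp only [Finset.mul_sum, ← Finset.sum_add_distrib]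
  refine Finset.sum_congr rfl fun α _ => Finset.sum_congr rfl fun β _ => ?_
  have hb : pd β (Qdn α β (Zm μ ν ξ) χ) p + pd β (Qdn α β ξ (Zm μ ν χ)) p
      = ((if μ = β then pd ν (Qdn α β ξ χ) p else 0) + p μ * pd ν (pd β (Qdn α β ξ χ)) p)
        + (if μ = α then pd β (Qdn ν β ξ χ) p else 0)
        + (if μ = β then pd β (Qdn α ν ξ χ) p else 0) := by
    rw [← pd_add (smDAt ((hξ.zm μ ν).qdn hχ α β) p) (smDAt (hξ.qdn (hχ.zm μ ν) α β) p) β,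
      zm_qdn hξ hχ μ ν α β,
      pd_add (smDAt (((sm_coord μ).mul ((hξ.qdn hχ α β).pd ν)).add
          (sm_if (μ = α) ((hξ.qdn hχ ν β)))) p)
        (smDAt (sm_if (μ = β) (hξ.qdn hχ α ν)) p) β,
      pd_add (smDAt ((sm_coord μ).mul ((hξ.qdn hχ α β).pd ν)) p)
        (smDAt (sm_if (μ = α) (hξ.qdn hχ ν β)) p) β,
      pd_coord_mul (smDAt ((hξ.qdn hχ α β).pd ν) p) β μ,
      pd_if (μ = α) β, pd_if (μ = β) β,
      congrFun (pd_comm (hξ.qdn hχ α β) β ν) p]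
  have ha : pd α (Qdn α β (Zm μ ν ξ) χ) p + pd α (Qdn α β ξ (Zm μ ν χ)) p
      = ((if μ = α then pd ν (Qdn α β ξ χ) p else 0) + p μ * pd ν (pd α (Qdn α β ξ χ)) p)
        + (if μ = α then pd α (Qdn ν β ξ χ) p else 0)
        + (if μ = β then pd α (Qdn α ν ξ χ) p else 0) := by
    rw [← pd_add (smDAt ((hξ.zm μ ν).qdn hχ α β) p) (smDAt (hξ.qdn (hχ.zm μ ν) α β) p) α,
      zm_qdn hξ hχ μ ν α β,
      pd_add (smDAt (((sm_coord μ).mul ((hξ.qdn hχ α β).pd ν)).add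
          (sm_if (μ = α) ((hξ.qdn hχ ν β)))) p)
        (smDAt (sm_if (μ = β) (hξ.qdn hχ α ν)) p) α,
      pd_add (smDAt ((sm_coord μ).mul ((hξ.qdn hχ α β).pd ν)) p)
        (smDAt (sm_if (μ = α) (hξ.qdn hχ ν β)) p) α,
      pd_coord_mul (smDAt ((hξ.qdn hχ α β).pd ν) p) α μ,
      pd_if (μ = α) α, pd_if (μ = β) α,
      congrFun (pd_comm (hξ.qdn hχ α β) α ν) p]
  rw [pd_zm hψ μ ν α, pd_zm hψ μ ν β]
  linear_combination -(eta α * pd α ψ p * eta β) * hb + (eta β * pd β ψ p * eta α) * ha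

lemma qdn_add1 {f g χ : Pt → ℝ} (hf : Sm f) (hg : Sm g) (α β : Fin 4) :
    Qdn α β (fun q => f q + g q) χ = fun q => Qdn α β f χ q + Qdn α β g χ q := by
  funext q; simp only [Qdn]
  rw [pd_add (smDAt hf q) (smDAt hg q) α, pd_add (smDAt hf q) (smDAt hg q) β]; ring

lemma qdn_add2 {ξ f g : Pt → ℝ} (hf : Sm f) (hg : Sm g) (α β : Fin 4) :
    Qdn α β ξ (fun q => f q + g q) = fun q => Qdn α β ξ f q + Qdn α β ξ g q := by
  funext q; simp only [Qdn]
  rw [pd_add (smDAt hf q) (smDAt hg q) α, pd_add (smDAt hf q) (smDAt hg q) β]; ring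

lemma qdn_sub1 {f g χ : Pt → ℝ} (hf : Sm f) (hg : Sm g) (α β : Fin 4) :
    Qdn α β (fun q => f q - g q) χ = fun q => Qdn α β f χ q - Qdn α β g χ q := by
  funext q; simp only [Qdn]
  rw [pd_sub (smDAt hf q) (smDAt hg q) α, pd_sub (smDAt hf q) (smDAt hg q) β]; ring

lemma qdn_sub2 {ξ f g : Pt → ℝ} (hf : Sm f) (hg : Sm g) (α β : Fin 4) :
    Qdn α β ξ (fun q => f q - g q) = fun q => Qdn α β ξ f q - Qdn α β ξ g q := by
  funext q; simp only [Qdn]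
  rw [pd_sub (smDAt hf q) (smDAt hg q) α, pd_sub (smDAt hf q) (smDAt hg q) β]; ring

lemma dnull_add1 {f g ξ χ : Pt → ℝ} (hf : Sm f) (hg : Sm g) (p : Pt) :
    dnull (fun q => f q + g q) ξ χ p = dnull f ξ χ p + dnull g ξ χ p := by
  unfold dnull
  simp only [← Finset.sum_add_distrib]
  refine Finset.sum_congr rfl fun α _ => Finset.sum_congr rfl fun β _ => ?_
  rw [pd_add (smDAt hf p) (smDAt hg p) α, pd_add (smDAt hf p) (smDAt hg p) β]; ring

lemma dnull_sub1 {f g ξ χ : Pt → ℝ} (hf : Sm f) (hg : Sm g) (p : Pt) :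
    dnull (fun q => f q - g q) ξ χ p = dnull f ξ χ p - dnull g ξ χ p := by
  unfold dnull
  simp only [← Finset.sum_sub_distrib]
  refine Finset.sum_congr rfl fun α _ => Finset.sum_congr rfl fun β _ => ?_
  rw [pd_sub (smDAt hf p) (smDAt hg p) α, pd_sub (smDAt hf p) (smDAt hg p) β]; ring

lemma dnull_add2 {ψ f g χ : Pt → ℝ} (hf : Sm f) (hg : Sm g) (hχ : Sm χ) (p : Pt) :
    dnull ψ (fun q => f q + g q) χ p = dnull ψ f χ p + dnull ψ g χ p := by
  unfold dnull
  simp only [← Finset.sum_add_distrib]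
  refine Finset.sum_congr rfl fun α _ => Finset.sum_congr rfl fun β _ => ?_
  rw [qdn_add1 hf hg α β,
    pd_add (smDAt (hf.qdn hχ α β) p) (smDAt (hg.qdn hχ α β) p) α,
    pd_add (smDAt (hf.qdn hχ α β) p) (smDAt (hg.qdn hχ α β) p) β]
  ring

lemma dnull_sub2 {ψ f g χ : Pt → ℝ} (hf : Sm f) (hg : Sm g) (hχ : Sm χ) (p : Pt) :
    dnull ψ (fun q => f q - g q) χ p = dnull ψ f χ p - dnull ψ g χ p := by
  unfold dnull
  simp only [← Finset.sum_sub_distrib]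
  refine Finset.sum_congr rfl fun α _ => Finset.sum_congr rfl fun β _ => ?_
  rw [qdn_sub1 hf hg α β,
    pd_sub (smDAt (hf.qdn hχ α β) p) (smDAt (hg.qdn hχ α β) p) α,
    pd_sub (smDAt (hf.qdn hχ α β) p) (smDAt (hg.qdn hχ α β) p) β]
  ring

lemma dnull_add3 {ψ ξ f g : Pt → ℝ} (hξ : Sm ξ) (hf : Sm f) (hg : Sm g) (p : Pt) :
    dnull ψ ξ (fun q => f q + g q) p = dnull ψ ξ f p + dnull ψ ξ g p := by
  unfold dnull
  simp only [← Finset.sum_add_distrib]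
  refine Finset.sum_congr rfl fun α _ => Finset.sum_congr rfl fun β _ => ?_
  rw [qdn_add2 hf hg α β,
    pd_add (smDAt (hξ.qdn hf α β) p) (smDAt (hξ.qdn hg α β) p) α,
    pd_add (smDAt (hξ.qdn hf α β) p) (smDAt (hξ.qdn hg α β) p) β]
  ring

lemma dnull_sub3 {ψ ξ f g : Pt → ℝ} (hξ : Sm ξ) (hf : Sm f) (hg : Sm g) (p : Pt) :
    dnull ψ ξ (fun q => f q - g q) p = dnull ψ ξ f p - dnull ψ ξ g p := by
  unfold dnull
  simp only [← Finset.sum_sub_distrib]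
  refine Finset.sum_congr rfl fun α _ => Finset.sum_congr rfl fun β _ => ?_
  rw [qdn_sub2 hf hg α β,
    pd_sub (smDAt (hξ.qdn hf α β) p) (smDAt (hξ.qdn hg α β) p) α,
    pd_sub (smDAt (hξ.qdn hf α β) p) (smDAt (hξ.qdn hg α β) p) β]
  ring

lemma eta0 : eta 0 = -1 := rfl
lemma eta1 : eta 1 = 1 := rfl
lemma eta2 : eta 2 = 1 := rfl
lemma eta3 : eta 3 = 1 := rfl

set_option maxHeartbeats 1000000 in
lemma corr_boost1 {ψ ξ χ : Pt → ℝ} (p : Pt) :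
    corr 0 1 ψ ξ χ p + corr 1 0 ψ ξ χ p = 0 := by
  simp only [corr, Fin.sum_univ_four, eta0, eta1, eta2, eta3, Fin.reduceEq, reduceIte,
    Fin.isValue, pd_qdn_diag, pd_qdn_swap 0 1, pd_qdn_swap 0 2, pd_qdn_swap 0 3,
    pd_qdn_swap 1 2, pd_qdn_swap 1 3, pd_qdn_swap 2 3]
  ring

set_option maxHeartbeats 1000000 in
lemma corr_boost2 {ψ ξ χ : Pt → ℝ} (p : Pt) :
    corr 0 2 ψ ξ χ p + corr 2 0 ψ ξ χ p = 0 := by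
  simp only [corr, Fin.sum_univ_four, eta0, eta1, eta2, eta3, Fin.reduceEq, reduceIte,
    Fin.isValue, pd_qdn_diag, pd_qdn_swap 0 1, pd_qdn_swap 0 2, pd_qdn_swap 0 3,
    pd_qdn_swap 1 2, pd_qdn_swap 1 3, pd_qdn_swap 2 3]
  ring

set_option maxHeartbeats 1000000 in
lemma corr_boost3 {ψ ξ χ : Pt → ℝ} (p : Pt) :
    corr 0 3 ψ ξ χ p + corr 3 0 ψ ξ χ p = 0 := by
  simp only [corr, Fin.sum_univ_four, eta0, eta1, eta2, eta3, Fin.reduceEq, reduceIte,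
    Fin.isValue, pd_qdn_diag, pd_qdn_swap 0 1, pd_qdn_swap 0 2, pd_qdn_swap 0 3,
    pd_qdn_swap 1 2, pd_qdn_swap 1 3, pd_qdn_swap 2 3]
  ring

set_option maxHeartbeats 1000000 in
lemma corr_rot12 {ψ ξ χ : Pt → ℝ} (p : Pt) :
    corr 1 2 ψ ξ χ p - corr 2 1 ψ ξ χ p = 0 := by
  simp only [corr, Fin.sum_univ_four, eta0, eta1, eta2, eta3, Fin.reduceEq, reduceIte,
    Fin.isValue, pd_qdn_diag, pd_qdn_swap 0 1, pd_qdn_swap 0 2, pd_qdn_swap 0 3,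
    pd_qdn_swap 1 2, pd_qdn_swap 1 3, pd_qdn_swap 2 3]
  ring

set_option maxHeartbeats 1000000 in
lemma corr_rot13 {ψ ξ χ : Pt → ℝ} (p : Pt) :
    corr 1 3 ψ ξ χ p - corr 3 1 ψ ξ χ p = 0 := by
  simp only [corr, Fin.sum_univ_four, eta0, eta1, eta2, eta3, Fin.reduceEq, reduceIte,
    Fin.isValue, pd_qdn_diag, pd_qdn_swap 0 1, pd_qdn_swap 0 2, pd_qdn_swap 0 3,
    pd_qdn_swap 1 2, pd_qdn_swap 1 3, pd_qdn_swap 2 3]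
  ring

set_option maxHeartbeats 1000000 in
lemma corr_rot23 {ψ ξ χ : Pt → ℝ} (p : Pt) :
    corr 2 3 ψ ξ χ p - corr 3 2 ψ ξ χ p = 0 := by
  simp only [corr, Fin.sum_univ_four, eta0, eta1, eta2, eta3, Fin.reduceEq, reduceIte,
    Fin.isValue, pd_qdn_diag, pd_qdn_swap 0 1, pd_qdn_swap 0 2, pd_qdn_swap 0 3,
    pd_qdn_swap 1 2, pd_qdn_swap 1 3, pd_qdn_swap 2 3]
  ring

set_option maxHeartbeats 2000000 in
lemma corr_scal {ψ ξ χ : Pt → ℝ} (p : Pt) :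
    corr 0 0 ψ ξ χ p + corr 1 1 ψ ξ χ p + corr 2 2 ψ ξ χ p + corr 3 3 ψ ξ χ p
      = 4 * dnull ψ ξ χ p := by
  simp only [corr, dnull, Fin.sum_univ_four, eta0, eta1, eta2, eta3, Fin.reduceEq, reduceIte,
    Fin.isValue, pd_qdn_diag, pd_qdn_swap 0 1, pd_qdn_swap 0 2, pd_qdn_swap 0 3,
    pd_qdn_swap 1 2, pd_qdn_swap 1 3, pd_qdn_swap 2 3]
  ring

lemma boost_generic {ψ ξ χ : Pt → ℝ} (hψ : Sm ψ) (hξ : Sm ξ) (hχ : Sm χ)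
    (a : Fin 4) (p : Pt) (hc : corr 0 a ψ ξ χ p + corr a 0 ψ ξ χ p = 0) :
    Zm 0 a (dnull ψ ξ χ) p + Zm a 0 (dnull ψ ξ χ) p
      = dnull (fun q => Zm 0 a ψ q + Zm a 0 ψ q) ξ χ p
        + dnull ψ (fun q => Zm 0 a ξ q + Zm a 0 ξ q) χ p
        + dnull ψ ξ (fun q => Zm 0 a χ q + Zm a 0 χ q) p := by
  have h1 := zm_dnull hψ hξ hχ 0 a p
  have h2 := zm_dnull hψ hξ hχ a 0 p
  rw [dnull_add1 (hψ.zm 0 a) (hψ.zm a 0) p, dnull_add2 (hξ.zm 0 a) (hξ.zm a 0) hχ p,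
    dnull_add3 hξ (hχ.zm 0 a) (hχ.zm a 0) p]
  linarith [h1, h2, hc]

lemma rot_generic {ψ ξ χ : Pt → ℝ} (hψ : Sm ψ) (hξ : Sm ξ) (hχ : Sm χ)
    (a b : Fin 4) (p : Pt) (hc : corr a b ψ ξ χ p - corr b a ψ ξ χ p = 0) :
    Zm a b (dnull ψ ξ χ) p - Zm b a (dnull ψ ξ χ) p
      = dnull (fun q => Zm a b ψ q - Zm b a ψ q) ξ χ p
        + dnull ψ (fun q => Zm a b ξ q - Zm b a ξ q) χ p
        + dnull ψ ξ (fun q => Zm a b χ q - Zm b a χ q) p := by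
  have h1 := zm_dnull hψ hξ hχ a b p
  have h2 := zm_dnull hψ hξ hχ b a p
  rw [dnull_sub1 (hψ.zm a b) (hψ.zm b a) p, dnull_sub2 (hξ.zm a b) (hξ.zm b a) hχ p,
    dnull_sub3 hξ (hχ.zm a b) (hχ.zm b a) p]
  linarith [h1, h2, hc]

lemma scal_decomp (f : Pt → ℝ) :
    scalOp f = fun q => (Zm 0 0 f q + Zm 1 1 f q) + (Zm 2 2 f q + Zm 3 3 f q) := by
  funext q
  simp only [scalOp, Zm, Fin.sum_univ_three, show ((0:Fin 3).succ : Fin 4) = 1 from rfl,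
    show ((1:Fin 3).succ : Fin 4) = 2 from rfl, show ((2:Fin 3).succ : Fin 4) = 3 from rfl]
  ring

lemma scal_main {ψ ξ χ : Pt → ℝ} (hψ : Sm ψ) (hξ : Sm ξ) (hχ : Sm χ) (p : Pt) :
    scalOp (dnull ψ ξ χ) p
      = dnull (scalOp ψ) ξ χ p + dnull ψ (scalOp ξ) χ p + dnull ψ ξ (scalOp χ) p
        + (-4) * dnull ψ ξ χ p := by
  have h00 := zm_dnull hψ hξ hχ 0 0 p
  have h11 := zm_dnull hψ hξ hχ 1 1 p
  have h22 := zm_dnull hψ hξ hχ 2 2 p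
  have h33 := zm_dnull hψ hξ hχ 3 3 p
  have hc := corr_scal (ψ := ψ) (ξ := ξ) (χ := χ) p
  rw [scal_decomp (dnull ψ ξ χ), scal_decomp ψ, scal_decomp ξ, scal_decomp χ,
    dnull_add1 ((hψ.zm 0 0).add (hψ.zm 1 1)) ((hψ.zm 2 2).add (hψ.zm 3 3)) p,
    dnull_add1 (hψ.zm 0 0) (hψ.zm 1 1) p, dnull_add1 (hψ.zm 2 2) (hψ.zm 3 3) p,
    dnull_add2 ((hξ.zm 0 0).add (hξ.zm 1 1)) ((hξ.zm 2 2).add (hξ.zm 3 3)) hχ p,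
    dnull_add2 (hξ.zm 0 0) (hξ.zm 1 1) hχ p, dnull_add2 (hξ.zm 2 2) (hξ.zm 3 3) hχ p,
    dnull_add3 hξ ((hχ.zm 0 0).add (hχ.zm 1 1)) ((hχ.zm 2 2).add (hχ.zm 3 3)) p,
    dnull_add3 hξ (hχ.zm 0 0) (hχ.zm 1 1) p, dnull_add3 hξ (hχ.zm 2 2) (hχ.zm 3 3) p]
  beta_reduce
  linarith [h00, h11, h22, h33, hc]


end Aux

/-- commutation of the Lorentz vector fields with the double null
form `Q^{αβ}(ψ, Q_{αβ}(ξ,χ))`: the Leibniz rule holds exactly for `∂_μ`, the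
boosts and the rotations, and up to `-4` times the double null form for `S`. -/
theorem double_null_form_commutes_with_lorentz_fields
    (ψ ξ χ : Pt → ℝ) (hψ : ContDiff ℝ (⊤:ℕ∞) ψ)
    (hξ : ContDiff ℝ (⊤:ℕ∞) ξ) (hχ : ContDiff ℝ (⊤:ℕ∞) χ) :
    (∀ μ : Fin 4, ∀ p : Pt,
      pd μ (dnull ψ ξ χ) p
        = dnull (pd μ ψ) ξ χ p + dnull ψ (pd μ ξ) χ p + dnull ψ ξ (pd μ χ) p) ∧
    (∀ k : Fin 3, ∀ p : Pt,
      boostOp k (dnull ψ ξ χ) p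
        = dnull (boostOp k ψ) ξ χ p + dnull ψ (boostOp k ξ) χ p
          + dnull ψ ξ (boostOp k χ) p) ∧
    (∀ i j : Fin 3, ∀ p : Pt,
      rotOp i j (dnull ψ ξ χ) p
        = dnull (rotOp i j ψ) ξ χ p + dnull ψ (rotOp i j ξ) χ p
          + dnull ψ ξ (rotOp i j χ) p) ∧
    (∀ p : Pt,
      scalOp (dnull ψ ξ χ) p
        = dnull (scalOp ψ) ξ χ p + dnull ψ (scalOp ξ) χ p + dnull ψ ξ (scalOp χ) p
          + (-4) * dnull ψ ξ χ p) := by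
  refine ⟨fun μ p => pd_dnull_leibniz hψ hξ hχ μ p, fun k p => ?_, fun i j p => ?_,
    fun p => scal_main hψ hξ hχ p⟩
  · fin_cases k
    · exact boost_generic hψ hξ hχ 1 p (corr_boost1 p)
    · exact boost_generic hψ hξ hχ 2 p (corr_boost2 p)
    · exact boost_generic hψ hξ hχ 3 p (corr_boost3 p)
  · fin_cases i <;> fin_cases j
    · exact rot_generic hψ hξ hχ 1 1 p (by ring)
    · exact rot_generic hψ hξ hχ 1 2 p (corr_rot12 p)
    · exact rot_generic hψ hξ hχ 1 3 p (corr_rot13 p)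
    · exact rot_generic hψ hξ hχ 2 1 p (by linarith [corr_rot12 (ψ := ψ) (ξ := ξ) (χ := χ) p])
    · exact rot_generic hψ hξ hχ 2 2 p (by ring)
    · exact rot_generic hψ hξ hχ 2 3 p (corr_rot23 p)
    · exact rot_generic hψ hξ hχ 3 1 p (by linarith [corr_rot13 (ψ := ψ) (ξ := ξ) (χ := χ) p])
    · exact rot_generic hψ hξ hχ 3 2 p (by linarith [corr_rot23 (ψ := ψ) (ξ := ξ) (χ := χ) p])
    · exact rot_generic hψ hξ hχ 3 3 p (by ring)
end
end

section
/- Let δ ∈ (0, 1/2), M ≥ 1 and C₀ ≥ 0, and set u = (t−|x|)/2 and ū = (t+|x|)/2. Let ψ be a C¹ function on the region R = {(t,x) ∈ ℝ × ℝ³ : t ≥ 1, 0 ≤ u ≤ δ} such that ψ = 0 on {u = 0} ∩ R, |ψ| ≤ C₀δ on {t = 1} ∩ R, and |L̲ψ| ≤ M/ū at every point of R. Then there is a constant C depending only on C₀ such that |ψ| ≤ C·δ·M/ū throughout R. -/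
noncomputable section

open Real MeasureTheory

/-- The short-pulse region II `= {t ≥ 1, 0 ≤ u ≤ δ}`. -/
def RegionII (δ : ℝ) : Set Pt := {p | 1 ≤ p 0 ∧ 0 ≤ uuf p ∧ uuf p ≤ δ}

lemma rr_nonneg (p : Pt) : 0 ≤ rr p := Real.sqrt_nonneg _

lemma continuous_rr : Continuous rr := by
  unfold rr
  exact Real.continuous_sqrt.comp (continuous_finset_sum _ fun i _ => (continuous_apply _).pow 2)

lemma continuous_uuf : Continuous uuf := by
  unfold uuf
  exact ((continuous_apply 0).sub continuous_rr).div_const 2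

/-- a `C¹` function on the short-pulse region that vanishes on
the outer cone `{u = 0}`, is `O(δ)` on the initial slice `{t = 1}`, and whose
incoming derivative satisfies `|L̲ψ| ≤ M/ū`, satisfies `|ψ| ≤ C·δ·M/ū` with `C`
depending only on `C₀`. -/
theorem smallness_from_incoming_derivative_decay (C₀ : ℝ) (hC₀ : 0 ≤ C₀) :
    ∃ C : ℝ, ∀ δ M : ℝ, δ ∈ Set.Ioo (0:ℝ) (1/2) → 1 ≤ M →
      ∀ ψ : Pt → ℝ, ContDiffOn ℝ 1 ψ (RegionII δ) →
        (∀ p ∈ RegionII δ, uuf p = 0 → ψ p = 0) →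
        (∀ p ∈ RegionII δ, p 0 = 1 → |ψ p| ≤ C₀ * δ) →
        (∀ p ∈ RegionII δ, |Lbop ψ p| ≤ M / ubf p) →
        ∀ p ∈ RegionII δ, |ψ p| ≤ C * δ * M / ubf p := by
  refine ⟨C₀ + 1, ?_⟩
  rintro δ M ⟨hδ0, hδ2⟩ hM ψ hψ hzero hinit hLb p hp
  obtain ⟨ht, hu0, huδ⟩ := hp
  have hrnn := rr_nonneg p
  have hrpos : 0 < rr p := by
    have h := huδ; unfold uuf at h; linarith
  have hubpos : 0 < ubf p := by unfold ubf; linarith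
  have hM0 : (0:ℝ) ≤ M := by linarith
  have hMub : 0 ≤ M / ubf p := div_nonneg hM0 hubpos.le
  have hre : (C₀+1)*δ*M/ubf p = C₀ * δ * (M / ubf p) + δ * (M / ubf p) := by
    field_simp
  by_cases hu00 : uuf p = 0
  · rw [hzero p ⟨ht, hu0, huδ⟩ hu00, abs_zero, hre]
    have : 0 ≤ C₀ * δ * (M / ubf p) := mul_nonneg (mul_nonneg hC₀ hδ0.le) hMub
    have : 0 ≤ δ * (M / ubf p) := mul_nonneg hδ0.le hMub
    linarith
  by_cases ht1 : p 0 = 1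
  · have h1 : |ψ p| ≤ C₀ * δ := hinit p ⟨ht, hu0, huδ⟩ ht1
    have hub1 : ubf p ≤ 1 := by
      have h := hu0; unfold uuf at h; unfold ubf; rw [ht1] at h ⊢; linarith
    have hM1 : 1 ≤ M / ubf p := (one_le_div hubpos).2 (le_trans hub1 hM)
    have h2 : C₀ * δ ≤ C₀ * δ * (M / ubf p) :=
      le_mul_of_one_le_right (mul_nonneg hC₀ hδ0.le) hM1
    have h3 : 0 ≤ δ * (M / ubf p) := mul_nonneg hδ0.le hMub
    rw [hre]; linarith
  -- main case
  have htpos : 1 < p 0 := lt_of_le_of_ne ht (Ne.symm ht1)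
  have hupos : 0 < uuf p := lt_of_le_of_ne hu0 (Ne.symm hu00)
  set S := min (uuf p) (p 0 - 1) with hSdef
  have hSpos : 0 < S := lt_min hupos (by linarith)
  have hSu : S ≤ uuf p := min_le_left _ _
  have hSt : S ≤ p 0 - 1 := min_le_right _ _
  set v : Pt := Fin.cons (-1) (fun i : Fin 3 => p i.succ / rr p) with hvdef
  set γ : ℝ → Pt := fun s => p + s • v with hγdef
  have hγ0 : γ 0 = p := by simp [hγdef]
  have hγt : ∀ s : ℝ, γ s 0 = p 0 - s := by
    intro s; simp [hγdef, hvdef]; ring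
  have hγx : ∀ (s : ℝ) (i : Fin 3), γ s i.succ = (1 + s / rr p) * p i.succ := by
    intro s i
    simp [hγdef, hvdef]
    field_simp
  have hγr : ∀ s : ℝ, 0 ≤ s → rr (γ s) = rr p + s := by
    intro s hs
    have hc : (0:ℝ) ≤ 1 + s / rr p := by positivity
    have hsq : ∀ i : Fin 3, (γ s i.succ)^2 = (1 + s/rr p)^2 * (p i.succ)^2 := by
      intro i; rw [hγx]; ring
    have h1 : rr (γ s) = Real.sqrt (∑ i : Fin 3, (γ s i.succ)^2) := rfl
    rw [h1, Finset.sum_congr rfl (fun i _ => hsq i), ← Finset.mul_sum,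
      Real.sqrt_mul (by positivity), Real.sqrt_sq hc]
    have hr : Real.sqrt (∑ i : Fin 3, p i.succ ^ 2) = rr p := rfl
    rw [hr]; field_simp
  have hγu : ∀ s : ℝ, 0 ≤ s → uuf (γ s) = uuf p - s := by
    intro s hs; unfold uuf; rw [hγt, hγr s hs]; ring
  have hγub : ∀ s : ℝ, 0 ≤ s → ubf (γ s) = ubf p := by
    intro s hs; unfold ubf; rw [hγt, hγr s hs]; ring
  have hmem : ∀ s ∈ Set.Icc (0:ℝ) S, γ s ∈ RegionII δ := by
    rintro s ⟨h0s, hsS⟩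
    refine ⟨?_, ?_, ?_⟩
    · rw [hγt]; linarith
    · rw [hγu s h0s]; linarith
    · rw [hγu s h0s]; linarith
  have hopen : IsOpen {q : Pt | 1 < q 0 ∧ 0 < uuf q ∧ uuf q < δ} := by
    simp only [Set.setOf_and]
    exact (isOpen_lt continuous_const (continuous_apply 0)).inter
      ((isOpen_lt continuous_const continuous_uuf).inter
        (isOpen_lt continuous_uuf continuous_const))
  have hnhds : ∀ s ∈ Set.Ioo (0:ℝ) S, RegionII δ ∈ nhds (γ s) := by
    rintro s ⟨h0s, hsS⟩
    refine mem_nhds_iff.2 ⟨_, ?_, hopen, ?_⟩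
    · rintro q ⟨h1, h2, h3⟩; exact ⟨h1.le, h2.le, h3.le⟩
    · refine ⟨?_, ?_, ?_⟩
      · rw [hγt]; linarith
      · rw [hγu s h0s.le]; linarith
      · rw [hγu s h0s.le]; linarith
  have hγderiv : ∀ s : ℝ, HasDerivAt γ v s := by
    intro s
    have h1 : HasDerivAt (fun s : ℝ => s • v) ((1:ℝ) • v) s := (hasDerivAt_id s).smul_const v
    have h2 := h1.const_add p
    simpa [hγdef, one_smul] using h2
  have hgderiv : ∀ s ∈ Set.Ioo (0:ℝ) S,
      HasDerivAt (fun s => ψ (γ s)) (-(Lbop ψ (γ s))) s := by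
    intro s hs
    have hdiff : DifferentiableAt ℝ ψ (γ s) :=
      (hψ.contDiffAt (hnhds s hs)).differentiableAt one_ne_zero
    have h := hdiff.hasFDerivAt.comp_hasDerivAt s (hγderiv s)
    have hom : ∀ i : Fin 3, om i (γ s) = p i.succ / rr p := by
      intro i
      unfold om
      rw [hγx, hγr s hs.1.le]
      rw [show (1:ℝ) + s / rr p = (rr p + s)/rr p by field_simp]
      have hrs : rr p + s ≠ 0 := (by have h1 := hs.1; linarith : (0:ℝ) < rr p + s).ne'
      field_simp
    have hvdecomp : v = -(Pi.single (0:Fin 4) (1:ℝ) : Pt)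
        + ∑ i : Fin 3, (om i (γ s)) • (Pi.single (i.succ) (1:ℝ) : Pt) := by
      funext μ
      refine Fin.cases ?_ ?_ μ
      · simp [hvdef, Pi.single_apply, hom, (Fin.succ_ne_zero _).symm]
      · intro j
        simp [hvdef, Pi.single_apply, hom, Fin.succ_inj, Fin.succ_ne_zero]
    have hfd : fderiv ℝ ψ (γ s) v = -(Lbop ψ (γ s)) := by
      rw [hvdecomp, map_add, map_neg, map_sum]
      simp only [_root_.map_smul, smul_eq_mul]
      unfold Lbop pdr pd
      ring
    rw [← hfd]
    exact h
  have hγcont : Continuous γ := by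
    rw [hγdef]; exact continuous_const.add (continuous_id.smul continuous_const)
  have hcont : ContinuousOn (fun s => ψ (γ s)) (Set.Icc 0 S) :=
    (hψ.continuousOn).comp hγcont.continuousOn hmem
  obtain ⟨c, hc, hslope⟩ := exists_hasDerivAt_eq_slope (fun s => ψ (γ s))
    (fun s => -(Lbop ψ (γ s))) hSpos hcont hgderiv
  have hLbc : |Lbop ψ (γ c)| ≤ M / ubf p := by
    have h := hLb (γ c) (hmem c ⟨hc.1.le, hc.2.le⟩)
    rwa [hγub c hc.1.le] at h
  have heq : ψ (γ S) - ψ p = S * (-(Lbop ψ (γ c))) := by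
    have h2 : -(Lbop ψ (γ c)) = (ψ (γ S) - ψ (γ 0)) / (S - 0) := hslope
    rw [hγ0] at h2
    rw [h2]
    field_simp
    rw [sub_zero, mul_div_assoc, div_self hSpos.ne', mul_one]
  have hkey : |ψ p| ≤ |ψ (γ S)| + S * (M / ubf p) := by
    have h1 : ψ p = ψ (γ S) - S * (-(Lbop ψ (γ c))) := by linarith
    rw [h1]
    calc |ψ (γ S) - S * (-(Lbop ψ (γ c)))|
        ≤ |ψ (γ S)| + |S * (-(Lbop ψ (γ c)))| := abs_sub _ _
      _ = |ψ (γ S)| + S * |Lbop ψ (γ c)| := by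
          rw [abs_mul, abs_neg, abs_of_pos hSpos]
      _ ≤ |ψ (γ S)| + S * (M / ubf p) := by
          have := mul_le_mul_of_nonneg_left hLbc hSpos.le
          linarith
  have hmemS : γ S ∈ RegionII δ := hmem S ⟨hSpos.le, le_refl S⟩
  have hend : |ψ (γ S)| ≤ C₀ * δ * (M / ubf p) := by
    rcases le_total (uuf p) (p 0 - 1) with hcase | hcase
    · have hSeq : S = uuf p := min_eq_left hcase
      have hz : uuf (γ S) = 0 := by rw [hγu S hSpos.le, hSeq]; ring
      rw [hzero (γ S) hmemS hz, abs_zero]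
      exact mul_nonneg (mul_nonneg hC₀ hδ0.le) hMub
    · have hSeq : S = p 0 - 1 := min_eq_right hcase
      have ht1' : γ S 0 = 1 := by rw [hγt, hSeq]; ring
      have hbd := hinit (γ S) hmemS ht1'
      have hu0S : 0 ≤ uuf (γ S) := hmemS.2.1
      have hrS : rr (γ S) ≤ 1 := by
        unfold uuf at hu0S; rw [ht1'] at hu0S; linarith
      have hub1 : ubf p ≤ 1 := by
        rw [← hγub S hSpos.le]; unfold ubf; rw [ht1']; linarith
      have hM1 : 1 ≤ M / ubf p := (one_le_div hubpos).2 (le_trans hub1 hM)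
      calc |ψ (γ S)| ≤ C₀ * δ := hbd
        _ ≤ C₀ * δ * (M / ubf p) := le_mul_of_one_le_right (mul_nonneg hC₀ hδ0.le) hM1
  have hSδ : S ≤ δ := le_trans hSu huδ
  have hfin : S * (M / ubf p) ≤ δ * (M / ubf p) := mul_le_mul_of_nonneg_right hSδ hMub
  rw [hre]
  linarith
end
end

section
/- Let (k^{αβ})_{0≤α,β≤3} be real numbers with k^{αβ} = k^{βα}, and let ψ : ℝ^{1+3} → ℝ be C². At every point with r > 0: Σ_{α,β=0}^3 k^{αβ}·∂_α∂_βψ = k_{L̲L̲}·L(Lψ) + 2k_{LL̲}·L(L̲ψ) + k_{LL}·L̲(L̲ψ) + Σ_{i,j=1}^3 k^{ij}·∂̄_i(∂̄_jψ) + Σ_{i=1}^3 k_{L̲}^{i}·L(∂̄_iψ) + Σ_{i=1}^3 k_{L}^{i}·L̲(∂̄_iψ) + (1/(2r))·tr̄k·(Lψ − L̲ψ) + (1/r)·Σ_{i,j=1}^3 k^{ij}ω_j·∂̄_iψ, where k_{L̲L̲} = (1/4)k^{00} + (1/2)Σ_i k^{0i}ω_i + (1/4)Σ_{i,j}k^{ij}ω_iω_j,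 k_{LL̲} = (1/4)(k^{00} − Σ_{i,j}k^{ij}ω_iω_j), k_{LL} = (1/4)k^{00} − (1/2)Σ_i k^{0i}ω_i + (1/4)Σ_{i,j}k^{ij}ω_iω_j, k_{L̲}^{i} = k^{0i} + Σ_j k^{ij}ω_j, k_{L}^{i} = k^{0i} − Σ_j k^{ij}ω_j, and tr̄k = Σ_{i,j}(δ_{ij} − ω_iω_j)k^{ij}. -/
noncomputable section

open Real MeasureTheory

lemma pd_contDiff (ψ : Pt → ℝ) (hψ : ContDiff ℝ 2 ψ) (ν : Fin 4) : ContDiff ℝ 1 (pd ν ψ) := by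
  unfold pd
  exact (hψ.fderiv_right (by norm_num)).clm_apply contDiff_const

lemma pd_symm (ψ : Pt → ℝ) (hψ : ContDiff ℝ 2 ψ) (μ ν : Fin 4) (p : Pt) :
    pd μ (pd ν ψ) p = pd ν (pd μ ψ) p := by
  have hd : Differentiable ℝ (fderiv ℝ ψ) :=
    (hψ.fderiv_right (m := 1) (le_refl 2)).differentiable (by norm_num)
  have key : ∀ α β : Fin 4, pd α (pd β ψ) p
      = fderiv ℝ (fderiv ℝ ψ) p (Pi.single α 1) (Pi.single β 1) := by
    intro α β
    show fderiv ℝ (fun q => fderiv ℝ ψ q (Pi.single β 1)) p (Pi.single α 1) = _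
    rw [fderiv_clm_apply (hd p) (differentiableAt_const _)]
    simp
  rw [key, key]
  exact (hψ.contDiffAt.isSymmSndFDerivAt (by norm_num)) _ _


lemma hasFDerivAt_rr (p : Pt) (hp : 0 < rr p) :
    HasFDerivAt rr
      (∑ j : Fin 3, om j p • (ContinuousLinearMap.proj j.succ : Pt →L[ℝ] ℝ)) p := by
  have hS0 : (0:ℝ) < ∑ i : Fin 3, p i.succ ^ 2 := by
    have h2 := hp; unfold rr at h2
    nlinarith [Real.sqrt_nonneg (∑ i : Fin 3, p i.succ ^ 2),
      Real.sq_sqrt (by positivity : (0:ℝ) ≤ ∑ i : Fin 3, p i.succ ^ 2)]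
  have hS : HasFDerivAt (fun q : Pt => ∑ i : Fin 3, q i.succ ^ 2)
      (∑ i : Fin 3, ((p i.succ • (ContinuousLinearMap.proj i.succ : Pt →L[ℝ] ℝ))
        + p i.succ • (ContinuousLinearMap.proj i.succ : Pt →L[ℝ] ℝ))) p := by
    have : (fun q : Pt => ∑ i : Fin 3, q i.succ ^ 2)
        = (fun q : Pt => ∑ i : Fin 3, q i.succ * q i.succ) := by
      funext q; exact Finset.sum_congr rfl fun i _ => sq (q i.succ)
    rw [this]
    exact HasFDerivAt.fun_sum fun i _ =>
      ((ContinuousLinearMap.proj i.succ : Pt →L[ℝ] ℝ).hasFDerivAt (x := p)).mul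
        ((ContinuousLinearMap.proj i.succ : Pt →L[ℝ] ℝ).hasFDerivAt (x := p))
  have h := (Real.hasDerivAt_sqrt (ne_of_gt hS0)).comp_hasFDerivAt p hS
  have hrs : Real.sqrt (∑ i : Fin 3, p i.succ ^ 2) = rr p := rfl
  have hr : rr p ≠ 0 := ne_of_gt hp
  refine h.congr_fderiv ?_
  ext v
  simp only [ContinuousLinearMap.smul_apply, ContinuousLinearMap.sum_apply,
    ContinuousLinearMap.add_apply, ContinuousLinearMap.proj_apply, hrs, smul_eq_mul,
    Finset.mul_sum]
  apply Finset.sum_congr rfl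
  intro j _
  simp only [om]
  field_simp
  ring

lemma hasFDerivAt_om (p : Pt) (hp : 0 < rr p) (i : Fin 3) :
    HasFDerivAt (om i)
      ((rr p)⁻¹ • ((ContinuousLinearMap.proj i.succ : Pt →L[ℝ] ℝ)
        - om i p • ∑ j : Fin 3, om j p • (ContinuousLinearMap.proj j.succ : Pt →L[ℝ] ℝ))) p := by
  have hr : rr p ≠ 0 := ne_of_gt hp
  have hinv : HasFDerivAt (fun q : Pt => (rr q)⁻¹)
      ((-((rr p) ^ 2)⁻¹) • ∑ j : Fin 3, om j p • (ContinuousLinearMap.proj j.succ : Pt →L[ℝ] ℝ)) p := by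
    exact (hasDerivAt_inv hr).comp_hasFDerivAt p (hasFDerivAt_rr p hp)
  have h := ((ContinuousLinearMap.proj i.succ : Pt →L[ℝ] ℝ).hasFDerivAt (x := p)).mul hinv
  have hfun : om i = fun q : Pt => q i.succ * (rr q)⁻¹ := by
    funext q; simp [om, div_eq_mul_inv]
  rw [hfun]
  refine h.congr_fderiv ?_
  ext v
  simp only [ContinuousLinearMap.smul_apply, ContinuousLinearMap.sum_apply,
    ContinuousLinearMap.add_apply, ContinuousLinearMap.sub_apply,
    ContinuousLinearMap.proj_apply, smul_eq_mul, om, Fin.sum_univ_three]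
  field_simp
  ring

set_option maxHeartbeats 4000000 in
/-- null-frame decomposition of a constant-coefficient symmetric
second-order operator `Σ_{α,β} k^{αβ} ∂_α∂_β ψ`. -/
theorem symmetric_tensor_null_frame_decomposition
    (k : Fin 4 → Fin 4 → ℝ) (hsymm : ∀ α β, k α β = k β α)
    (ψ : Pt → ℝ) (hψ : ContDiff ℝ 2 ψ) :
    ∀ p : Pt, 0 < rr p →
      ∑ α : Fin 4, ∑ β : Fin 4, k α β * pd α (pd β ψ) p
        = ((1/4) * k 0 0 + (1/2) * ∑ i : Fin 3, k 0 i.succ * om i p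
            + (1/4) * ∑ i : Fin 3, ∑ j : Fin 3, k i.succ j.succ * om i p * om j p)
              * Lop (Lop ψ) p
          + 2 * ((1/4) * (k 0 0 - ∑ i : Fin 3, ∑ j : Fin 3, k i.succ j.succ * om i p * om j p))
              * Lop (Lbop ψ) p
          + ((1/4) * k 0 0 - (1/2) * ∑ i : Fin 3, k 0 i.succ * om i p
            + (1/4) * ∑ i : Fin 3, ∑ j : Fin 3, k i.succ j.succ * om i p * om j p)
              * Lbop (Lbop ψ) p
          + (∑ i : Fin 3, ∑ j : Fin 3, k i.succ j.succ * pbar i (pbar j ψ) p)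
          + (∑ i : Fin 3, (k 0 i.succ + ∑ j : Fin 3, k i.succ j.succ * om j p)
              * Lop (pbar i ψ) p)
          + (∑ i : Fin 3, (k 0 i.succ - ∑ j : Fin 3, k i.succ j.succ * om j p)
              * Lbop (pbar i ψ) p)
          + (1 / (2 * rr p))
            * (∑ i : Fin 3, ∑ j : Fin 3,
                ((if i = j then (1:ℝ) else 0) - om i p * om j p) * k i.succ j.succ)
            * (Lop ψ p - Lbop ψ p)
          + (1 / rr p) * ∑ i : Fin 3, ∑ j : Fin 3, k i.succ j.succ * om j p * pbar i ψ p := by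
  intro p hp
  have hr : rr p ≠ 0 := ne_of_gt hp
  have hψd : ∀ ν : Fin 4, Differentiable ℝ (pd ν ψ) :=
    fun ν => (pd_contDiff ψ hψ ν).differentiable (by norm_num)
  set Dom : Fin 3 → (Pt →L[ℝ] ℝ) := fun i =>
    (rr p)⁻¹ • ((ContinuousLinearMap.proj i.succ : Pt →L[ℝ] ℝ)
      - om i p • ∑ j : Fin 3, om j p • (ContinuousLinearMap.proj j.succ : Pt →L[ℝ] ℝ))
    with hDom
  have hom : ∀ i, HasFDerivAt (om i) (Dom i) p := fun i => hasFDerivAt_om p hp i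
  have hDom0 : ∀ i, (Dom i) (Pi.single (0 : Fin 4) 1) = 0 := by
    intro i
    simp [hDom, Pi.single_apply, Fin.succ_ne_zero, ContinuousLinearMap.sum_apply]
  have hDomS : ∀ i j : Fin 3, (Dom i) (Pi.single (j.succ : Fin 4) 1)
      = ((if i = j then (1:ℝ) else 0) - om i p * om j p) / rr p := by
    intro i j
    simp only [hDom, ContinuousLinearMap.smul_apply, ContinuousLinearMap.sub_apply,
      ContinuousLinearMap.sum_apply, ContinuousLinearMap.proj_apply, smul_eq_mul,
      Pi.single_apply, Fin.sum_univ_three]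
    rw [div_eq_inv_mul]
    fin_cases i <;> fin_cases j <;>
      norm_num [Pi.single_apply, Fin.ext_iff, Fin.succ] <;>
      exact Or.inl (Or.inl rfl)
  set Dpdr : Pt →L[ℝ] ℝ :=
    ∑ i : Fin 3, (om i p • fderiv ℝ (pd i.succ ψ) p + pd i.succ ψ p • Dom i) with hDpdr
  have hpdrD : HasFDerivAt (pdr ψ) Dpdr p := by
    have : HasFDerivAt (fun q => ∑ i : Fin 3, om i q * pd i.succ ψ q) Dpdr p :=
      HasFDerivAt.fun_sum fun i _ => (hom i).mul (hψd i.succ p).hasFDerivAt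
    exact this
  have Fpdr : ∀ μ : Fin 4, pd μ (pdr ψ) p
      = ∑ i : Fin 3, (om i p * pd μ (pd i.succ ψ) p
          + pd i.succ ψ p * (Dom i) (Pi.single μ 1)) := by
    intro μ
    show fderiv ℝ (pdr ψ) p (Pi.single μ 1) = _
    rw [hpdrD.fderiv]
    simp [hDpdr, ContinuousLinearMap.sum_apply]
    rfl
  have F2 : ∀ μ : Fin 4, pd μ (Lop ψ) p = pd μ (pd 0 ψ) p + pd μ (pdr ψ) p := by
    intro μ
    have h : HasFDerivAt (fun q => pd 0 ψ q + pdr ψ q)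
        (fderiv ℝ (pd 0 ψ) p + fderiv ℝ (pdr ψ) p) p :=
      (hψd 0 p).hasFDerivAt.add (hpdrD.fderiv ▸ hpdrD)
    show fderiv ℝ (Lop ψ) p (Pi.single μ 1) = _
    rw [show Lop ψ = fun q => pd 0 ψ q + pdr ψ q from rfl, h.fderiv]
    rfl
  have F3 : ∀ μ : Fin 4, pd μ (Lbop ψ) p = pd μ (pd 0 ψ) p - pd μ (pdr ψ) p := by
    intro μ
    have h : HasFDerivAt (fun q => pd 0 ψ q - pdr ψ q)
        (fderiv ℝ (pd 0 ψ) p - fderiv ℝ (pdr ψ) p) p :=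
      (hψd 0 p).hasFDerivAt.sub (hpdrD.fderiv ▸ hpdrD)
    show fderiv ℝ (Lbop ψ) p (Pi.single μ 1) = _
    rw [show Lbop ψ = fun q => pd 0 ψ q - pdr ψ q from rfl, h.fderiv]
    rfl
  have F4 : ∀ (μ : Fin 4) (j : Fin 3), pd μ (pbar j ψ) p
      = pd μ (pd j.succ ψ) p
        - (om j p * pd μ (pdr ψ) p + pdr ψ p * (Dom j) (Pi.single μ 1)) := by
    intro μ j
    have h : HasFDerivAt (fun q => pd j.succ ψ q - om j q * pdr ψ q)
        (fderiv ℝ (pd j.succ ψ) p - (om j p • fderiv ℝ (pdr ψ) p + pdr ψ p • Dom j)) p :=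
      (hψd j.succ p).hasFDerivAt.sub ((hom j).mul (hpdrD.fderiv ▸ hpdrD))
    show fderiv ℝ (pbar j ψ) p (Pi.single μ 1) = _
    rw [show pbar j ψ = fun q => pd j.succ ψ q - om j q * pdr ψ q from rfl, h.fderiv]
    simp
    rfl
  have unfoldL : ∀ f : Pt → ℝ, Lop f p
      = pd 0 f p + ∑ m : Fin 3, om m p * pd m.succ f p := fun f => rfl
  have unfoldLb : ∀ f : Pt → ℝ, Lbop f p
      = pd 0 f p - ∑ m : Fin 3, om m p * pd m.succ f p := fun f => rfl
  have unfoldPb : ∀ (i : Fin 3) (f : Pt → ℝ), pbar i f p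
      = pd i.succ f p - om i p * ∑ m : Fin 3, om m p * pd m.succ f p := fun i f => rfl
  have unfoldPdr : pdr ψ p = ∑ m : Fin 3, om m p * pd m.succ ψ p := rfl
  have hH10 : pd 1 (pd 0 ψ) p = pd 0 (pd 1 ψ) p := pd_symm ψ hψ 1 0 p
  have hH20 : pd 2 (pd 0 ψ) p = pd 0 (pd 2 ψ) p := pd_symm ψ hψ 2 0 p
  have hH30 : pd 3 (pd 0 ψ) p = pd 0 (pd 3 ψ) p := pd_symm ψ hψ 3 0 p
  have hH21 : pd 2 (pd 1 ψ) p = pd 1 (pd 2 ψ) p := pd_symm ψ hψ 2 1 p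
  have hH31 : pd 3 (pd 1 ψ) p = pd 1 (pd 3 ψ) p := pd_symm ψ hψ 3 1 p
  have hH32 : pd 3 (pd 2 ψ) p = pd 2 (pd 3 ψ) p := pd_symm ψ hψ 3 2 p
  have e0 : ((0 : Fin 3).succ : Fin 4) = 1 := rfl
  have e1 : ((1 : Fin 3).succ : Fin 4) = 2 := rfl
  have e2 : ((2 : Fin 3).succ : Fin 4) = 3 := rfl
  have hs : om 0 p ^ 2 + om 1 p ^ 2 + om 2 p ^ 2 = 1 := by
    have h2 : rr p ^ 2 = ∑ i : Fin 3, p i.succ ^ 2 :=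
      Real.sq_sqrt (by positivity)
    rw [Fin.sum_univ_three, e0, e1, e2] at h2
    simp only [om, div_pow, e0, e1, e2]
    field_simp
    linarith [h2]
  simp only [unfoldL, unfoldLb, unfoldPb, F2, F3, F4, Fpdr, unfoldPdr, hDom0, hDomS,
    Fin.sum_univ_three, Fin.sum_univ_four, e0, e1, e2]
  norm_num [Fin.ext_iff]
  rw [hH10, hH20, hH30, hH21, hH31, hH32, hsymm 1 0, hsymm 2 0, hsymm 3 0,
    hsymm 2 1, hsymm 3 1, hsymm 3 2]
  linear_combination (-((k 1 1 * om 0 p * om 0 p + k 1 2 * om 0 p * om 1 p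
    + k 1 3 * om 0 p * om 2 p + k 1 2 * om 1 p * om 0 p + k 2 2 * om 1 p * om 1 p
    + k 2 3 * om 1 p * om 2 p + k 1 3 * om 2 p * om 0 p + k 2 3 * om 2 p * om 1 p
    + k 3 3 * om 2 p * om 2 p)
    * (om 0 p * pd 1 ψ p + om 1 p * pd 2 ψ p + om 2 p * pd 3 ψ p)) / rr p) * hs
end
end
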